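/- Let n ≥ 1 and let N be a real number with N > 2n + 1. There exists a constant C > 0, depending only on n and N, such that the following holds. For every family of nonnegative coefficients c : ℤⁿ → [0,∞), define f_{j'} : ℝⁿ → [0,∞] by f_{j'}(x) = Σ_{k'∈ℤⁿ} c(k')·1_{[0,1)ⁿ}(2^{j'}·x − k'). Then for all integers j, j' with j ≥ j', every k ∈ ℤⁿ, and every x ∈ ℝⁿ with 2^{j}·x − k ∈ [0,1)ⁿ, one has Σ_{k'∈ℤⁿ} c(k')·(1 + ‖k' − 2^{j'−j}·k‖)^{−N} ≤ C · M f_{j'}(x). -/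

import Mathlib

open MeasureTheory ENNReal

/-- A point of `ℤⁿ` regarded as a point of Euclidean space `ℝⁿ`. -/
noncomputable def intPt (n : ℕ) (k : Fin n → ℤ) : EuclideanSpace ℝ (Fin n) :=
  (WithLp.equiv 2 (Fin n → ℝ)).symm (fun i => (k i : ℝ))

/-- The unit cube `[0,1)ⁿ` in `ℝⁿ`. -/
def unitCube (n : ℕ) : Set (EuclideanSpace ℝ (Fin n)) :=
  {y | ∀ i, 0 ≤ y i ∧ y i < 1}

/-- The Hardy–Littlewood maximal function of `g : ℝⁿ → [0,∞]`. -/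
noncomputable def maxFn (n : ℕ) (g : EuclideanSpace ℝ (Fin n) → ℝ≥0∞)
    (x : EuclideanSpace ℝ (Fin n)) : ℝ≥0∞ :=
  ⨆ (r : ℝ) (_ : 0 < r), (∫⁻ y in Metric.ball x r, g y) / volume (Metric.ball x r)

/-- The function `f_{j'}(x) = ∑_{k'} c(k') 1_{[0,1)ⁿ}(2^{j'} x - k')`. -/
noncomputable def waveletSum (n : ℕ) (c : (Fin n → ℤ) → NNReal) (j' : ℤ)
    (x : EuclideanSpace ℝ (Fin n)) : ℝ≥0∞ :=
  ∑' k' : Fin n → ℤ,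
    (c k' : ℝ≥0∞) * (unitCube n).indicator 1 ((2 : ℝ) ^ j' • x - intPt n k')

open Metric in
/-- Any point of the unit cube has norm at most `√n`. -/
lemma norm_le_sqrt_of_mem_unitCube {n : ℕ} {z : EuclideanSpace ℝ (Fin n)}
    (hz : z ∈ unitCube n) : ‖z‖ ≤ Real.sqrt n := by
  rw [EuclideanSpace.norm_eq]
  apply Real.sqrt_le_sqrt
  calc ∑ i, ‖z i‖^2 ≤ ∑ _i : Fin n, 1 := by
        apply Finset.sum_le_sum; intro i _
        have h1 : |z i| ≤ 1 := abs_le.mpr ⟨by linarith [(hz i).1], (hz i).2.le⟩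
        calc ‖z i‖^2 = |z i|^2 := by rw [Real.norm_eq_abs]
          _ ≤ 1^2 := pow_le_pow_left₀ (abs_nonneg _) h1 2
          _ = 1 := one_pow 2
    _ = n := by simp

/-- Lemma 2.6, case `j ≥ j'`: for `N > 2n+1` there is `C = C(n, N) > 0` such that for
`j ≥ j'`, `k ∈ ℤⁿ` and `x` with `2^j x - k ∈ [0,1)ⁿ`,
`∑_{k'} c(k') (1+‖k' - 2^{j'-j} k‖)^{-N} ≤ C · M f_{j'}(x)`. -/
theorem sum_le_maximal_of_ge (n : ℕ) (hn : 1 ≤ n) (N : ℝ) (hN : 2 * (n : ℝ) + 1 < N) :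
    ∃ C : ℝ, 0 < C ∧
      ∀ (c : (Fin n → ℤ) → NNReal) (j j' : ℤ), j' ≤ j →
        ∀ (k : Fin n → ℤ) (x : EuclideanSpace ℝ (Fin n)),
          (2 : ℝ) ^ j • x - intPt n k ∈ unitCube n →
          (∑' k' : Fin n → ℤ, (c k' : ℝ≥0∞) *
              ENNReal.ofReal ((1 + ‖intPt n k' - (2 : ℝ) ^ (j' - j) • intPt n k‖) ^ (-N)))
            ≤ ENNReal.ofReal C * maxFn n (waveletSum n c j') x := by
  classical
  open Metric in
  haveI : Nonempty (Fin n) := ⟨⟨0, hn⟩⟩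
  haveI : Nontrivial (EuclideanSpace ℝ (Fin n)) := inferInstance
  have hncast : (1:ℝ) ≤ (n:ℝ) := by exact_mod_cast hn
  have hN0 : 0 < N := by linarith
  set sq : ℝ := Real.sqrt n with hsqdef
  have hsq : 0 ≤ sq := Real.sqrt_nonneg _
  set V₁ : ℝ≥0∞ := volume (Metric.ball (0 : EuclideanSpace ℝ (Fin n)) 1) with hV₁def
  have hV₁t : V₁ ≠ ⊤ := measure_ball_lt_top.ne
  set qq : ℝ := (2:ℝ) ^ ((n:ℝ) - N) with hqqdef
  have hqq0 : 0 ≤ qq := Real.rpow_nonneg (by norm_num) _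
  have hqq1 : qq < 1 := Real.rpow_lt_one_of_one_lt_of_neg (by norm_num) (by linarith)
  set Bc : ℝ := (2 + 2*sq)^n with hBcdef
  have hBc0 : 0 ≤ Bc := by positivity
  set K : ℝ≥0∞ := V₁ * (ENNReal.ofReal Bc * (1 - ENNReal.ofReal qq)⁻¹) with hKdef
  have hKt : K ≠ ⊤ := by
    apply ENNReal.mul_ne_top hV₁t
    apply ENNReal.mul_ne_top ENNReal.ofReal_ne_top
    rw [ENNReal.inv_ne_top]
    simp only [ne_eq, tsub_eq_zero_iff_le, not_le]
    exact ENNReal.ofReal_lt_one.mpr hqq1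
  refine ⟨K.toReal + 1, by positivity, ?_⟩
  intro c j j' hj k x hx
  set M : ℝ≥0∞ := maxFn n (waveletSum n c j') x with hMdef
  set p : ℝ := (2:ℝ) ^ j' with hpdef
  have hp : 0 < p := zpow_pos (by norm_num) _
  set d : (Fin n → ℤ) → ℝ := fun k' => ‖intPt n k' - (2:ℝ)^(j'-j) • intPt n k‖ with hddef
  have hd0 : ∀ k', 0 ≤ d k' := fun _ => norm_nonneg _
  -- cubes
  set Q : (Fin n → ℤ) → Set (EuclideanSpace ℝ (Fin n)) :=
    fun k' => {y | (2:ℝ) ^ j' • y - intPt n k' ∈ unitCube n} with hQdef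
  have hQeq : ∀ k', Q k' = (MeasurableEquiv.toLp 2 (Fin n → ℝ)).symm ⁻¹'
      (Set.univ.pi fun i => Set.Ico ((k' i : ℝ)/p) (((k' i : ℝ)+1)/p)) := by
    intro k'; ext y
    have e : ∀ i, ((2:ℝ) ^ j' • y - intPt n k') i = p * y i - k' i := fun i => rfl
    have e2 : ∀ i, (MeasurableEquiv.toLp 2 (Fin n → ℝ)).symm y i = y i := fun i => rfl
    simp only [hQdef, Set.mem_setOf_eq, unitCube, Set.mem_preimage, Set.mem_pi, Set.mem_univ,
      true_implies, Set.mem_Ico, e, e2]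
    constructor
    · intro h i
      constructor
      · rw [div_le_iff₀ hp]; linarith [(h i).1]
      · rw [lt_div_iff₀ hp]; linarith [(h i).2]
    · intro h i
      have h1 := (div_le_iff₀ hp).mp (h i).1
      have h2 := (lt_div_iff₀ hp).mp (h i).2
      constructor <;> linarith
  have hQm : ∀ k', MeasurableSet (Q k') := fun k' => (hQeq k') ▸
    (MeasurableEquiv.toLp 2 (Fin n → ℝ)).symm.measurable
      (MeasurableSet.univ_pi fun i => measurableSet_Ico)
  set vQ : ℝ≥0∞ := ENNReal.ofReal ((1/p)^n) with hvQdef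
  have hvQ0 : vQ ≠ 0 := by
    rw [hvQdef]; simp only [ne_eq, ENNReal.ofReal_eq_zero, not_le]; positivity
  have hvQt : vQ ≠ ⊤ := ENNReal.ofReal_ne_top
  have hQvol : ∀ k', volume (Q k') = vQ := by
    intro k'
    rw [hQeq k', (EuclideanSpace.volume_preserving_symm_measurableEquiv_toLp (Fin n)).measure_preimage
      ((MeasurableSet.univ_pi fun i => measurableSet_Ico).nullMeasurableSet), volume_pi_pi]
    have e : ∀ i : Fin n, volume (Set.Ico ((k' i : ℝ)/p) (((k' i : ℝ)+1)/p))
        = ENNReal.ofReal (1/p) := by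
      intro i; rw [Real.volume_Ico]; congr 1; field_simp; ring
    rw [Finset.prod_congr rfl (fun i _ => e i), Finset.prod_const, Finset.card_univ,
      Fintype.card_fin, hvQdef, ← ENNReal.ofReal_pow (by positivity)]
  -- waveletSum as a sum of indicators of the cubes
  have hwav : ∀ y, waveletSum n c j' y = ∑' k', (Q k').indicator (fun _ => (c k' : ℝ≥0∞)) y := by
    intro y
    unfold waveletSum
    apply tsum_congr; intro k'
    by_cases h : (2:ℝ)^j' • y - intPt n k' ∈ unitCube n
    · rw [Set.indicator_of_mem h, Set.indicator_of_mem (show y ∈ Q k' from h)]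
      simp
    · rw [Set.indicator_of_notMem h, Set.indicator_of_notMem (show y ∉ Q k' from h)]
      simp
  have hint_eq : ∀ r : ℝ, ∫⁻ y in Metric.ball x r, waveletSum n c j' y
      = ∑' k', (c k' : ℝ≥0∞) * volume (Q k' ∩ Metric.ball x r) := by
    intro r
    rw [lintegral_congr hwav,
      lintegral_tsum (fun k' => (measurable_const.indicator (hQm k')).aemeasurable)]
    apply tsum_congr; intro k'
    rw [lintegral_indicator (hQm k'), setLIntegral_const, Measure.restrict_apply (hQm k')]
  -- geometry
  have hxnorm : ‖(2:ℝ)^j • x - intPt n k‖ ≤ sq := norm_le_sqrt_of_mem_unitCube hx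
  have hgeo : ∀ (m : ℕ) k', 1 + d k' < 2^(m+1) →
      Q k' ⊆ Metric.ball x (((2:ℝ)^(m+1) + 2*sq)/p) := by
    intro m k' hk' y hy
    have h1 : ‖(2:ℝ)^j' • y - intPt n k'‖ ≤ sq := norm_le_sqrt_of_mem_unitCube hy
    have h3 : ‖(2:ℝ)^(j'-j) • intPt n k - (2:ℝ)^j' • x‖ ≤ sq := by
      have e : (2:ℝ)^(j'-j) • intPt n k - (2:ℝ)^j' • x
          = ((2:ℝ)^(j'-j)) • (intPt n k - (2:ℝ)^j • x) := by
        rw [smul_sub, smul_smul, ← zpow_add₀ (by norm_num : (2:ℝ) ≠ 0)]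
        ring_nf
      rw [e, norm_smul, norm_sub_rev]
      have habs : |(2:ℝ)^(j'-j)| ≤ 1 := by
        rw [abs_of_pos (zpow_pos (by norm_num : (0:ℝ) < 2) (j'-j))]
        calc (2:ℝ)^(j'-j) ≤ 2^(0:ℤ) := zpow_le_zpow_right₀ (by norm_num) (by omega)
          _ = 1 := by norm_num
      calc |(2:ℝ)^(j'-j)| * ‖(2:ℝ)^j • x - intPt n k‖ ≤ 1 * sq :=
            mul_le_mul habs hxnorm (norm_nonneg _) one_pos.le
        _ = sq := one_mul sq
    have key : p * ‖y - x‖ ≤ sq + d k' + sq := by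
      have e2 : p • (y - x) = ((2:ℝ)^j' • y - intPt n k')
          + (intPt n k' - (2:ℝ)^(j'-j) • intPt n k)
          + ((2:ℝ)^(j'-j) • intPt n k - (2:ℝ)^j' • x) := by
        rw [hpdef, smul_sub]; abel
      have h4 : ‖p • (y - x)‖ ≤ sq + d k' + sq := by
        rw [e2]
        refine norm_add₃_le.trans ?_
        exact add_le_add (add_le_add h1 le_rfl) h3
      rwa [norm_smul, Real.norm_eq_abs, abs_of_pos hp] at h4
    rw [Metric.mem_ball, dist_eq_norm, lt_div_iff₀ hp]
    have : d k' < 2^(m+1) - 1 := by linarith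
    have h2m : (1:ℝ) ≤ 2^(m+1) := one_le_pow₀ (by norm_num)
    nlinarith [key, hp]
  -- annular sums
  set S : ℕ → ℝ≥0∞ := fun m => ∑' k', (if 1 + d k' < 2^(m+1) then (c k' : ℝ≥0∞) else 0)
    with hSdef
  have hSm : ∀ m : ℕ, S m ≤ M * ENNReal.ofReal (((2:ℝ)^(m+1) + 2*sq)^n) * V₁ := by
    intro m
    set t : ℝ := (2:ℝ)^(m+1) + 2*sq with htdef
    have ht0 : 0 < t := by positivity
    set r : ℝ := t/p with hrdef
    have hr : 0 < r := div_pos ht0 hp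
    have hint : S m * vQ ≤ ∫⁻ y in Metric.ball x r, waveletSum n c j' y := by
      rw [hint_eq r, hSdef, ← ENNReal.tsum_mul_right]
      apply ENNReal.tsum_le_tsum
      intro k'
      by_cases h : 1 + d k' < 2^(m+1)
      · rw [if_pos h, Set.inter_eq_self_of_subset_left (hgeo m k' h), hQvol k']
      · simp [if_neg h]
    have hM : (∫⁻ y in Metric.ball x r, waveletSum n c j' y) / volume (Metric.ball x r) ≤ M :=
      le_iSup₂ (f := fun r (_ : 0 < r) =>
        (∫⁻ y in Metric.ball x r, waveletSum n c j' y) / volume (Metric.ball x r)) r hr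
    have hB0 : volume (Metric.ball x r) ≠ 0 := (measure_ball_pos _ _ hr).ne'
    have hBt : volume (Metric.ball x r) ≠ ⊤ := measure_ball_lt_top.ne
    have h2 : S m * vQ ≤ M * volume (Metric.ball x r) :=
      hint.trans ((ENNReal.div_le_iff hB0 hBt).mp hM)
    have hvol : volume (Metric.ball x r) = ENNReal.ofReal (t^n) * vQ * V₁ := by
      rw [Measure.addHaar_ball _ _ hr.le, finrank_euclideanSpace_fin, hV₁def]
      congr 1
      rw [hvQdef, ← ENNReal.ofReal_mul (by positivity)]
      congr 1
      rw [hrdef, div_eq_mul_one_div, mul_pow]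
    rw [hvol] at h2
    apply (ENNReal.mul_le_mul_iff_left hvQ0 hvQt).mp
    calc S m * vQ ≤ M * (ENNReal.ofReal (t^n) * vQ * V₁) := h2
      _ = M * ENNReal.ofReal (t^n) * V₁ * vQ := by ring
  -- pointwise comparison with a geometric-type sum
  have hpt : ∀ k', (c k' : ℝ≥0∞) * ENNReal.ofReal ((1 + d k') ^ (-N))
      ≤ ∑' m : ℕ, (if 1 + d k' < 2^(m+1)
          then (c k' : ℝ≥0∞) * ENNReal.ofReal (((2:ℝ)^m) ^ (-N)) else 0) := by
    intro k'
    have hD : 1 ≤ 1 + d k' := by linarith [hd0 k']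
    have hex : ∃ m : ℕ, 1 + d k' < 2^(m+1) := by
      obtain ⟨m, hm⟩ := pow_unbounded_of_one_lt (1 + d k') (by norm_num : (1:ℝ) < 2)
      exact ⟨m, hm.trans_le (pow_le_pow_right₀ (by norm_num) (by omega))⟩
    have hspec := Nat.find_spec hex
    have hlow : (2:ℝ)^(Nat.find hex) ≤ 1 + d k' := by
      rcases Nat.eq_zero_or_pos (Nat.find hex) with h0 | h0
      · rw [h0]; simpa using hD
      · have hmin := Nat.find_min hex (m := Nat.find hex - 1) (by omega)
        push_neg at hmin
        calc (2:ℝ)^(Nat.find hex) = 2^((Nat.find hex - 1) + 1) := by congr 1; omega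
          _ ≤ 1 + d k' := hmin
    calc (c k' : ℝ≥0∞) * ENNReal.ofReal ((1 + d k') ^ (-N))
        ≤ (c k' : ℝ≥0∞) * ENNReal.ofReal (((2:ℝ)^(Nat.find hex)) ^ (-N)) :=
          mul_le_mul_right (ENNReal.ofReal_le_ofReal
            (Real.rpow_le_rpow_of_nonpos (by positivity) hlow (by linarith))) _
      _ = (if 1 + d k' < 2^(Nat.find hex + 1)
            then (c k' : ℝ≥0∞) * ENNReal.ofReal (((2:ℝ)^(Nat.find hex)) ^ (-N)) else 0) := by
          rw [if_pos hspec]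
      _ ≤ _ := ENNReal.le_tsum (Nat.find hex)
  -- the elementary bound on the series terms
  have hterm : ∀ m : ℕ, ((2:ℝ)^m) ^ (-N) * ((2:ℝ)^(m+1) + 2*sq)^n ≤ Bc * qq^m := by
    intro m
    have h2m : (0:ℝ) < 2^m := by positivity
    have h1m : (1:ℝ) ≤ 2^m := one_le_pow₀ (by norm_num)
    have ht : (2:ℝ)^(m+1) + 2*sq ≤ 2^m * (2 + 2*sq) := by
      rw [pow_succ, mul_comm ((2:ℝ)^m) 2]
      nlinarith
    calc ((2:ℝ)^m) ^ (-N) * ((2:ℝ)^(m+1) + 2*sq)^n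
        ≤ ((2:ℝ)^m) ^ (-N) * ((2:ℝ)^m * (2 + 2*sq))^n := by
          apply mul_le_mul_of_nonneg_left (pow_le_pow_left₀ (by positivity) ht n)
            (Real.rpow_nonneg h2m.le _)
      _ = ((2:ℝ)^m) ^ (-N) * ((2:ℝ)^m)^(n:ℕ) * Bc := by rw [mul_pow, hBcdef]; ring
      _ = ((2:ℝ)^m) ^ ((n:ℝ) - N) * Bc := by
          rw [← Real.rpow_natCast ((2:ℝ)^m) n, ← Real.rpow_add h2m]
          ring_nf
      _ = Bc * qq^m := by
          rw [hqqdef, ← Real.rpow_natCast 2 m, ← Real.rpow_mul (by norm_num : (0:ℝ) ≤ 2),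
            ← Real.rpow_natCast ((2:ℝ) ^ ((n:ℝ) - N)) m,
            ← Real.rpow_mul (by norm_num : (0:ℝ) ≤ 2), mul_comm (m:ℝ) ((n:ℝ) - N)]
          ring
  -- main chain
  have main : (∑' k' : Fin n → ℤ, (c k' : ℝ≥0∞) *
        ENNReal.ofReal ((1 + d k') ^ (-N))) ≤ ENNReal.ofReal (K.toReal + 1) * M := by
    calc (∑' k' : Fin n → ℤ, (c k' : ℝ≥0∞) * ENNReal.ofReal ((1 + d k') ^ (-N)))
        ≤ ∑' k', ∑' m : ℕ, (if 1 + d k' < 2^(m+1)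
            then (c k' : ℝ≥0∞) * ENNReal.ofReal (((2:ℝ)^m) ^ (-N)) else 0) :=
          ENNReal.tsum_le_tsum hpt
      _ = ∑' m : ℕ, ∑' k', (if 1 + d k' < 2^(m+1)
            then (c k' : ℝ≥0∞) * ENNReal.ofReal (((2:ℝ)^m) ^ (-N)) else 0) := ENNReal.tsum_comm
      _ = ∑' m : ℕ, ENNReal.ofReal (((2:ℝ)^m) ^ (-N)) * S m := by
          apply tsum_congr; intro m
          rw [hSdef, ← ENNReal.tsum_mul_left]
          apply tsum_congr; intro k'
          split <;> simp [mul_comm]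
      _ ≤ ∑' m : ℕ, ENNReal.ofReal (((2:ℝ)^m) ^ (-N)) *
            (M * ENNReal.ofReal (((2:ℝ)^(m+1) + 2*sq)^n) * V₁) :=
          ENNReal.tsum_le_tsum fun m => mul_le_mul_right (hSm m) _
      _ = M * V₁ * ∑' m : ℕ, ENNReal.ofReal (((2:ℝ)^m) ^ (-N) * ((2:ℝ)^(m+1) + 2*sq)^n) := by
          rw [← ENNReal.tsum_mul_left]
          apply tsum_congr; intro m
          rw [ENNReal.ofReal_mul (by positivity)]
          ring
      _ ≤ M * V₁ * ∑' m : ℕ, ENNReal.ofReal (Bc * qq^m) :=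
          mul_le_mul_right (ENNReal.tsum_le_tsum fun m =>
            ENNReal.ofReal_le_ofReal (hterm m)) _
      _ = M * V₁ * (ENNReal.ofReal Bc * (1 - ENNReal.ofReal qq)⁻¹) := by
          congr 1
          have e : ∀ m : ℕ, ENNReal.ofReal (Bc * qq^m)
              = ENNReal.ofReal Bc * (ENNReal.ofReal qq)^m := fun m => by
            rw [ENNReal.ofReal_mul hBc0, ENNReal.ofReal_pow hqq0]
          rw [tsum_congr e, ENNReal.tsum_mul_left, ENNReal.tsum_geometric]
      _ = K * M := by rw [hKdef]; ring
      _ ≤ ENNReal.ofReal (K.toReal + 1) * M := by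
          apply mul_le_mul_left
          calc K = ENNReal.ofReal K.toReal := (ENNReal.ofReal_toReal hKt).symm
            _ ≤ ENNReal.ofReal (K.toReal + 1) := ENNReal.ofReal_le_ofReal (by linarith)
  exact main
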